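/- Let n ≥ 1, let a : {1,…,n}³ → ℝ be symmetric under all permutations of its three indices, and let λ ∈ ℝⁿ with Σᵢ λᵢ² = 1. Then Σₖ (Σᵢ a_{iik} λᵢ)² ≤ Σ_{i,k} (a_{iik})² ≤ Σ_{i,j,k} (a_{ijk})², and moreover (1 + 2/(n+1)) · Σₖ (Σᵢ a_{iik} λᵢ)² ≤ Σ_{i,j,k} (a_{ijk})² + (2n/(n+1)) · Σₖ (Σᵢ a_{iik})². -/

import Mathlib

open Finset

/-- Swap the two indices in a sum over pairs of distinct indices. -/
lemma pair_swap {n : ℕ} (g : Fin n → Fin n → ℝ) :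
    ∑ k, ∑ i ∈ Finset.univ.erase k, g k i = ∑ k, ∑ i ∈ Finset.univ.erase k, g i k := by
  have key : ∀ (g : Fin n → Fin n → ℝ),
      (∑ k : Fin n, ∑ i : Fin n, if i = k then 0 else g k i)
        = ∑ k, ∑ i ∈ Finset.univ.erase k, g k i := by
    intro g
    refine Finset.sum_congr rfl fun k _ => ?_
    rw [← Finset.add_sum_erase Finset.univ (fun i => if i = k then 0 else g k i)
      (Finset.mem_univ k), if_pos rfl, zero_add]
    exact Finset.sum_congr rfl fun i hi => if_neg (Finset.ne_of_mem_erase hi)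
  rw [← key g, ← key (fun k i => g i k)]
  rw [Finset.sum_comm]
  refine Finset.sum_congr rfl fun k _ => Finset.sum_congr rfl fun i _ => ?_
  by_cases h : i = k
  · subst h; simp
  · rw [if_neg h, if_neg (fun hh => h hh.symm)]

theorem stmt0 (n : ℕ) (hn : 1 ≤ n) (a : Fin n → Fin n → Fin n → ℝ)
    (hsymm1 : ∀ i j k, a i j k = a j i k)
    (hsymm2 : ∀ i j k, a i j k = a i k j)
    (lam : Fin n → ℝ) (hlam : ∑ i, (lam i) ^ 2 = 1) :
    ((∑ k, (∑ i, a i i k * lam i) ^ 2) ≤ ∑ i, ∑ k, (a i i k) ^ 2) ∧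
    ((∑ i, ∑ k, (a i i k) ^ 2) ≤ ∑ i, ∑ j, ∑ k, (a i j k) ^ 2) ∧
    ((1 + 2 / ((n : ℝ) + 1)) * ∑ k, (∑ i, a i i k * lam i) ^ 2
      ≤ (∑ i, ∑ j, ∑ k, (a i j k) ^ 2)
        + (2 * (n : ℝ) / ((n : ℝ) + 1)) * ∑ k, (∑ i, a i i k) ^ 2) := by
  set S := ∑ k, (∑ i, a i i k * lam i) ^ 2 with hS_def
  -- Part 1 : Cauchy-Schwarz in i, for each k
  have part1 : S ≤ ∑ k, ∑ i, (a i i k) ^ 2 := by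
    apply Finset.sum_le_sum
    intro k _
    calc (∑ i, a i i k * lam i) ^ 2
        ≤ (∑ i, (a i i k) ^ 2) * ∑ i, (lam i) ^ 2 :=
          Finset.sum_mul_sq_le_sq_mul_sq _ _ _
      _ = ∑ i, (a i i k) ^ 2 := by rw [hlam, mul_one]
  have part1' : S ≤ ∑ i, ∑ k, (a i i k) ^ 2 := by
    rw [Finset.sum_comm]; exact part1
  -- Part 2
  have part2 : (∑ i, ∑ k, (a i i k) ^ 2) ≤ ∑ i, ∑ j, ∑ k, (a i j k) ^ 2 := by
    apply Finset.sum_le_sum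
    intro i _
    exact Finset.single_le_sum (f := fun j => ∑ k, (a i j k) ^ 2)
      (fun j _ => Finset.sum_nonneg fun k _ => sq_nonneg _) (Finset.mem_univ i)
  refine ⟨part1', part2, ?_⟩
  -- notation for part 3
  set T := ∑ i, ∑ j, ∑ k, (a i j k) ^ 2 with hT_def
  set H2 := ∑ k, (∑ i, a i i k) ^ 2 with hH2_def
  set D := ∑ k, (a k k k) ^ 2 with hD_def
  set O := ∑ k, ∑ i ∈ Finset.univ.erase k, (a i i k) ^ 2 with hO_def
  have hOnonneg : 0 ≤ O :=
    Finset.sum_nonneg fun k _ => Finset.sum_nonneg fun i _ => sq_nonneg _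
  have hH2nonneg : 0 ≤ H2 := Finset.sum_nonneg fun k _ => sq_nonneg _
  -- split of the partial trace square sum
  have hsplit : ∑ k, ∑ i, (a i i k) ^ 2 = D + O := by
    rw [hD_def, hO_def, ← Finset.sum_add_distrib]
    refine Finset.sum_congr rfl fun k _ => ?_
    exact (Finset.add_sum_erase _ (fun i => (a i i k) ^ 2) (Finset.mem_univ k)).symm
  -- step A : S ≤ D + O
  have stepA : S ≤ D + O := by rw [← hsplit]; exact part1
  -- step B : D + 3 * O ≤ T
  have stepB : D + 3 * O ≤ T := by
    have hT' : T = ∑ k, ∑ i, ∑ j, (a i j k) ^ 2 := by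
      rw [hT_def]
      rw [show (∑ i, ∑ j, ∑ k, (a i j k) ^ 2) = ∑ i, ∑ k, ∑ j, (a i j k) ^ 2 from
        Finset.sum_congr rfl fun i _ => Finset.sum_comm]
      exact Finset.sum_comm
    -- within fixed k: keep diagonal i = j, pairs (i,k) with i ≠ k, and (k,j) with j ≠ k
    have hkbound : ∀ k : Fin n, (a k k k) ^ 2 + ∑ i ∈ Finset.univ.erase k, (a i i k) ^ 2
        + (∑ i ∈ Finset.univ.erase k, (a i k k) ^ 2
          + ∑ j ∈ Finset.univ.erase k, (a k j k) ^ 2)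
        ≤ ∑ i, ∑ j, (a i j k) ^ 2 := by
      intro k
      have hinner : ∀ i : Fin n, ∑ j, (a i j k) ^ 2
          = (a i i k) ^ 2 + ∑ j ∈ Finset.univ.erase i, (a i j k) ^ 2 :=
        fun i => (Finset.add_sum_erase _ (fun j => (a i j k) ^ 2) (Finset.mem_univ i)).symm
      have h1 : ∑ i ∈ Finset.univ.erase k, (a i k k) ^ 2
          ≤ ∑ i ∈ Finset.univ.erase k, ∑ j ∈ Finset.univ.erase i, (a i j k) ^ 2 := by
        apply Finset.sum_le_sum
        intro i hi
        exact Finset.single_le_sum (f := fun j => (a i j k) ^ 2)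
          (fun j _ => sq_nonneg _)
          (Finset.mem_erase.2 ⟨(Finset.ne_of_mem_erase hi).symm, Finset.mem_univ k⟩)
      have h2 : ∑ i, ∑ j ∈ Finset.univ.erase i, (a i j k) ^ 2
          = ∑ j ∈ Finset.univ.erase k, (a k j k) ^ 2
            + ∑ i ∈ Finset.univ.erase k, ∑ j ∈ Finset.univ.erase i, (a i j k) ^ 2 :=
        (Finset.add_sum_erase _
          (fun i => ∑ j ∈ Finset.univ.erase i, (a i j k) ^ 2) (Finset.mem_univ k)).symm
      have h3 : ∑ i, ∑ j, (a i j k) ^ 2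
          = (∑ i, (a i i k) ^ 2) + ∑ i, ∑ j ∈ Finset.univ.erase i, (a i j k) ^ 2 := by
        rw [← Finset.sum_add_distrib]
        exact Finset.sum_congr rfl fun i _ => hinner i
      have h4 : (a k k k) ^ 2 + ∑ i ∈ Finset.univ.erase k, (a i i k) ^ 2
          = ∑ i, (a i i k) ^ 2 :=
        Finset.add_sum_erase _ (fun i => (a i i k) ^ 2) (Finset.mem_univ k)
      rw [h3, h2, ← h4]
      linarith
    have hsum := Finset.sum_le_sum (fun k (_ : k ∈ Finset.univ) => hkbound k)
    rw [← hT'] at hsum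
    -- identify the two extra sums with O via pair_swap and full symmetry
    have e1 : ∑ k, ∑ i ∈ Finset.univ.erase k, (a i k k) ^ 2 = O := by
      rw [pair_swap (fun k i => (a i k k) ^ 2), hO_def]
      exact Finset.sum_congr rfl fun k _ => Finset.sum_congr rfl fun i _ => by
        rw [hsymm1 k i i, hsymm2 i k i]
    have e2 : ∑ k, ∑ j ∈ Finset.univ.erase k, (a k j k) ^ 2 = O := by
      rw [pair_swap (fun k j => (a k j k) ^ 2), hO_def]
      exact Finset.sum_congr rfl fun k _ => Finset.sum_congr rfl fun i _ => by
        rw [hsymm2 i i k]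
    calc D + 3 * O = ∑ k, ((a k k k) ^ 2 + ∑ i ∈ Finset.univ.erase k, (a i i k) ^ 2
          + (∑ i ∈ Finset.univ.erase k, (a i k k) ^ 2
            + ∑ j ∈ Finset.univ.erase k, (a k j k) ^ 2)) := by
          simp only [Finset.sum_add_distrib]
          rw [e1, e2, ← hD_def, ← hO_def]
          ring
      _ ≤ T := hsum
  -- step C : D ≤ n * H2 + n * O
  have stepC : D ≤ (n : ℝ) * H2 + (n : ℝ) * O := by
    have hk : ∀ k : Fin n, (a k k k) ^ 2
        ≤ (n : ℝ) * ((∑ i, a i i k) ^ 2 + ∑ i ∈ Finset.univ.erase k, (a i i k) ^ 2) := by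
      intro k
      set g : Fin n → ℝ := fun i => if i = k then (∑ i, a i i k) else -(a i i k) with hg
      have hgk : g k = ∑ i, a i i k := by simp [hg]
      have h1 : ∑ i ∈ Finset.univ.erase k, g i = -(∑ i ∈ Finset.univ.erase k, a i i k) := by
        rw [← Finset.sum_neg_distrib]
        exact Finset.sum_congr rfl fun i hi => by
          simp [hg, Finset.ne_of_mem_erase hi]
      have h2 : a k k k + ∑ i ∈ Finset.univ.erase k, a i i k = ∑ i, a i i k :=
        Finset.add_sum_erase _ (fun i => a i i k) (Finset.mem_univ k)
      have hgsum : ∑ i, g i = a k k k := by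
        rw [← Finset.add_sum_erase Finset.univ g (Finset.mem_univ k), hgk, h1]
        linarith
      have hgsq : ∑ i, g i ^ 2
          = (∑ i, a i i k) ^ 2 + ∑ i ∈ Finset.univ.erase k, (a i i k) ^ 2 := by
        rw [← Finset.add_sum_erase Finset.univ (fun i => g i ^ 2) (Finset.mem_univ k)]
        have h3 : ∑ i ∈ Finset.univ.erase k, g i ^ 2
            = ∑ i ∈ Finset.univ.erase k, (a i i k) ^ 2 :=
          Finset.sum_congr rfl fun i hi => by
            simp [hg, Finset.ne_of_mem_erase hi]
        rw [h3, hgk]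
      have hcs := sq_sum_le_card_mul_sum_sq (s := (Finset.univ : Finset (Fin n))) (f := g)
      rw [hgsum, hgsq] at hcs
      have hcard : (((Finset.univ : Finset (Fin n)).card : ℝ)) = (n : ℝ) := by simp
      calc (a k k k) ^ 2
          ≤ (((Finset.univ : Finset (Fin n)).card : ℝ))
              * ((∑ i, a i i k) ^ 2 + ∑ i ∈ Finset.univ.erase k, (a i i k) ^ 2) := by
            exact_mod_cast hcs
        _ = (n : ℝ) * ((∑ i, a i i k) ^ 2 + ∑ i ∈ Finset.univ.erase k, (a i i k) ^ 2) := by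
            rw [hcard]
    calc D ≤ ∑ k, (n : ℝ) * ((∑ i, a i i k) ^ 2 + ∑ i ∈ Finset.univ.erase k, (a i i k) ^ 2) :=
          Finset.sum_le_sum fun k _ => hk k
      _ = (n : ℝ) * H2 + (n : ℝ) * O := by
          rw [← Finset.mul_sum, Finset.sum_add_distrib, ← hH2_def, ← hO_def, mul_add]
  -- combine
  have hpos : (0 : ℝ) < (n : ℝ) + 1 := by positivity
  have key : ((n : ℝ) + 3) * S ≤ ((n : ℝ) + 1) * T + 2 * (n : ℝ) * H2 := by
    nlinarith [mul_le_mul_of_nonneg_left stepA (by positivity : (0:ℝ) ≤ (n:ℝ) + 3),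
      mul_le_mul_of_nonneg_left stepB (by positivity : (0:ℝ) ≤ (n:ℝ) + 1)]
  have hcoef : (1 : ℝ) + 2 / ((n : ℝ) + 1) = ((n : ℝ) + 3) / ((n : ℝ) + 1) := by
    field_simp
    ring
  have lhs_eq : (1 + 2 / ((n : ℝ) + 1)) * S = (((n : ℝ) + 3) * S) / ((n : ℝ) + 1) := by
    rw [hcoef, div_mul_eq_mul_div]
  have rhs_eq : T + (2 * (n : ℝ) / ((n : ℝ) + 1)) * H2
      = (((n : ℝ) + 1) * T + 2 * (n : ℝ) * H2) / ((n : ℝ) + 1) := by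
    field_simp
  rw [lhs_eq, rhs_eq]
  exact (div_le_div_iff_of_pos_right hpos).mpr key
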